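/- Let (X, μ) be a measure space with 0 < μ(X) < ∞, let 1 ≤ q < p < ∞ and 1 ≤ r < ∞, and let f : X → [0,∞) be measurable with M_p := ‖f‖_{L^{p,∞}} < ∞ and M_q := ‖f‖_{L^{q,∞}} > 0. Then ∫₀^∞ λ^{r−1} · d_f(λ)^{r/q} dλ ≤ (p/(p−q)) · M_q^r · ( 1/r + log( μ(X)^{1/q − 1/p} · M_p / M_q ) ). -/

import Mathlib

open MeasureTheory Set

private lemma exp_rpow' (t y : ℝ) : (Real.exp t) ^ y = Real.exp (t * y) := by
  rw [Real.rpow_def_of_pos (Real.exp_pos t), Real.log_exp]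

private lemma final_identity (p q r u v w E : ℝ) (hp : 0 < p) (hq : 0 < q) (hr : 0 < r)
    (hpq : 0 < p - q) :
    E / r + E * ((p*u - q*v)/(p-q) - (v - w/q)) + E * (q / (r*(p-q)))
      = p / (p - q) * E * (1/r + (w*(1/q - 1/p) + u - v)) := by
  field_simp
  ring

private lemma lint_Ioc_rpow (a b c : ℝ) (ha : 0 ≤ a) (hab : a ≤ b) (hc : -1 < c) :
    ∫⁻ l in Set.Ioc a b, ENNReal.ofReal (l ^ c) =
      ENNReal.ofReal ((b ^ (c + 1) - a ^ (c + 1)) / (c + 1)) := by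
  have hint : IntegrableOn (fun l : ℝ => l ^ c) (Set.Ioc a b) :=
    (intervalIntegral.intervalIntegrable_rpow' hc (a := a) (b := b)).1
  rw [← ofReal_integral_eq_lintegral_ofReal hint]
  · rw [← intervalIntegral.integral_of_le hab, integral_rpow (Or.inl hc)]
  · filter_upwards [ae_restrict_mem measurableSet_Ioc] with x hx
    exact Real.rpow_nonneg (le_trans ha hx.1.le) c

private lemma lint_Ioc_inv (a b : ℝ) (ha : 0 < a) (hab : a ≤ b) :
    ∫⁻ l in Set.Ioc a b, ENNReal.ofReal l⁻¹ = ENNReal.ofReal (Real.log (b / a)) := by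
  have h0 : (0:ℝ) ∉ Set.uIcc a b := by
    rw [Set.mem_uIcc]; push_neg
    constructor <;> intro h <;> linarith
  have hint : IntegrableOn (fun l : ℝ => 1 / l) (Set.Ioc a b) :=
    (intervalIntegral.intervalIntegrable_one_div (fun x hx => by
      rcases Set.mem_uIcc.1 hx with h | h
      · linarith [h.1]
      · linarith [h.1, h.2]) (by fun_prop)).1
  have h2 := ofReal_integral_eq_lintegral_ofReal hint (by
    filter_upwards [ae_restrict_mem measurableSet_Ioc] with x hx
    have : 0 < x := lt_trans ha hx.1
    positivity)
  simp only [one_div] at h2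
  rw [← h2, ← intervalIntegral.integral_of_le hab]
  simp only [← one_div]
  rw [integral_one_div h0]

private lemma lint_Ioi_rpow (b c : ℝ) (hb : 0 < b) (hc : c < -1) :
    ∫⁻ l in Set.Ioi b, ENNReal.ofReal (l ^ c) =
      ENNReal.ofReal (-b ^ (c + 1) / (c + 1)) := by
  have hint : IntegrableOn (fun l : ℝ => l ^ c) (Set.Ioi b) :=
    integrableOn_Ioi_rpow_of_lt hc hb
  rw [← ofReal_integral_eq_lintegral_ofReal hint]
  · rw [integral_Ioi_rpow_of_lt hc hb]
  · filter_upwards [ae_restrict_mem measurableSet_Ioi] with x hx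
    exact Real.rpow_nonneg (le_trans hb.le hx.le) c

/-- The weak Lorentz quasinorm `‖f‖_{L^{s,∞}} = sup_{λ>0} λ·μ({f > λ})^{1/s}`
(valued in `ENNReal`). -/
noncomputable def weakLorentzNorm {X : Type*} [MeasurableSpace X]
    (μ : Measure X) (f : X → ℝ) (s : ℝ) : ENNReal :=
  ⨆ l ∈ Set.Ioi (0 : ℝ), ENNReal.ofReal l * (μ {x | l < f x}) ^ (1 / s)

/-- on a finite measure space with `0 < μ(X) < ∞`, for
`1 ≤ q < p < ∞`, `1 ≤ r < ∞` and a measurable nonnegative `f` with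
`M_p := ‖f‖_{L^{p,∞}} < ∞` and `M_q := ‖f‖_{L^{q,∞}} > 0`, one has
`∫₀^∞ λ^{r−1}·d_f(λ)^{r/q} dλ
  ≤ (p/(p−q))·M_q^r·(1/r + log(μ(X)^{1/q−1/p}·M_p/M_q))`. -/
theorem stmt_4 {X : Type*} [MeasurableSpace X] (μ : Measure X)
    (f : X → ℝ) (hf : Measurable f) (hf0 : ∀ x, 0 ≤ f x)
    (p q r : ℝ) (hq : 1 ≤ q) (hqp : q < p) (hr : 1 ≤ r)
    (hμ0 : μ Set.univ ≠ 0) (hμ : μ Set.univ ≠ ⊤)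
    (hMp : weakLorentzNorm μ f p ≠ ⊤) (hMq : weakLorentzNorm μ f q ≠ 0) :
    ∫⁻ l in Set.Ioi (0 : ℝ),
        ENNReal.ofReal (l ^ (r - 1)) * (μ {x | l < f x}) ^ (r / q) ≤
      ENNReal.ofReal (p / (p - q) * (weakLorentzNorm μ f q).toReal ^ r *
        (1 / r + Real.log ((μ Set.univ).toReal ^ (1 / q - 1 / p) *
          (weakLorentzNorm μ f p).toReal / (weakLorentzNorm μ f q).toReal))) := by
  have hq0 : (0:ℝ) < q := lt_of_lt_of_le one_pos hq
  have hp0 : (0:ℝ) < p := hq0.trans hqp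
  have hr0 : (0:ℝ) < r := lt_of_lt_of_le one_pos hr
  have hpq : (0:ℝ) < p - q := sub_pos.2 hqp
  have hqp' : (0:ℝ) ≤ 1/q - 1/p := by
    have := one_div_lt_one_div_of_lt hq0 hqp
    linarith
  have hdle : ∀ l : ℝ, μ {x | l < f x} ≤ μ Set.univ := fun l => measure_mono (Set.subset_univ _)
  have hdtop : ∀ l : ℝ, μ {x | l < f x} ≠ ⊤ := fun l => ne_top_of_le_ne_top hμ (hdle l)
  have hA : ∀ s : ℝ, ∀ l : ℝ, 0 < l →
      ENNReal.ofReal l * (μ {x | l < f x}) ^ (1/s) ≤ weakLorentzNorm μ f s := by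
    intro s l hl
    exact le_iSup₂ (f := fun (l : ℝ) (_ : l ∈ Set.Ioi (0:ℝ)) =>
      ENNReal.ofReal l * (μ {x | l < f x}) ^ (1/s)) l hl
  have hMqle : weakLorentzNorm μ f q ≤ (μ Set.univ) ^ (1/q - 1/p) * weakLorentzNorm μ f p := by
    rw [weakLorentzNorm]
    refine iSup₂_le fun l hl => ?_
    rcases eq_or_ne (μ {x | l < f x}) 0 with h0 | h0
    · rw [h0, ENNReal.zero_rpow_of_pos (by positivity), mul_zero]; exact zero_le
    · have he : (μ {x | l < f x}) ^ (1/q)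
          = (μ {x | l < f x}) ^ (1/p) * (μ {x | l < f x}) ^ (1/q - 1/p) := by
        rw [← ENNReal.rpow_add _ _ h0 (hdtop l)]; ring_nf
      rw [he, ← mul_assoc]
      calc ENNReal.ofReal l * (μ {x | l < f x}) ^ (1/p) * (μ {x | l < f x}) ^ (1/q-1/p)
          ≤ weakLorentzNorm μ f p * (μ Set.univ) ^ (1/q-1/p) :=
            mul_le_mul' (hA p l hl) (ENNReal.rpow_le_rpow (hdle l) hqp')
        _ = _ := mul_comm _ _
  have hqtop : weakLorentzNorm μ f q ≠ ⊤ :=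
    ne_top_of_le_ne_top
      (ENNReal.mul_ne_top (ENNReal.rpow_ne_top_of_nonneg hqp' hμ) hMp) hMqle
  have hMp0 : weakLorentzNorm μ f p ≠ 0 := by
    intro h
    exact hMq (le_antisymm (hMqle.trans (by rw [h, mul_zero])) zero_le)
  have hD : ∀ s : ℝ, 0 < s → weakLorentzNorm μ f s ≠ ⊤ → ∀ l : ℝ, 0 < l →
      μ {x | l < f x} ≤ ENNReal.ofReal (((weakLorentzNorm μ f s).toReal / l) ^ s) := by
    intro s hs hstop l hl
    have h1 : (μ {x | l < f x}) ^ (1/s) ≤ ENNReal.ofReal ((weakLorentzNorm μ f s).toReal / l) := by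
      rw [ENNReal.ofReal_div_of_pos hl, ENNReal.ofReal_toReal hstop,
        ENNReal.le_div_iff_mul_le (Or.inl (by simp [hl])) (Or.inl ENNReal.ofReal_ne_top),
        mul_comm]
      exact hA s l hl
    have h2 := ENNReal.rpow_le_rpow h1 hs.le
    rwa [← ENNReal.rpow_mul, one_div_mul_cancel hs.ne', ENNReal.rpow_one,
      ENNReal.ofReal_rpow_of_nonneg (div_nonneg ENNReal.toReal_nonneg hl.le) hs.le] at h2
  -- real constants
  set Mp' := (weakLorentzNorm μ f p).toReal with hMp'def
  set Mq' := (weakLorentzNorm μ f q).toReal with hMq'def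
  set A := (μ Set.univ).toReal with hAdef
  have hMp'pos : 0 < Mp' := ENNReal.toReal_pos hMp0 hMp
  have hMq'pos : 0 < Mq' := ENNReal.toReal_pos hMq hqtop
  have hApos : 0 < A := ENNReal.toReal_pos hμ0 hμ
  set u := Real.log Mp' with hu
  set v := Real.log Mq' with hv
  set w := Real.log A with hw
  have hMp'e : Mp' = Real.exp u := (Real.exp_log hMp'pos).symm
  have hMq'e : Mq' = Real.exp v := (Real.exp_log hMq'pos).symm
  have hAe : A = Real.exp w := (Real.exp_log hApos).symm
  have hvle : v ≤ (1/q - 1/p) * w + u := by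
    have h1 : Mq' ≤ A ^ (1/q - 1/p) * Mp' := by
      rw [hMq'def, hAdef, hMp'def, ENNReal.toReal_rpow, ← ENNReal.toReal_mul]
      exact ENNReal.toReal_mono
        (ENNReal.mul_ne_top (ENNReal.rpow_ne_top_of_nonneg hqp' hμ) hMp) hMqle
    calc v ≤ Real.log (A ^ (1/q-1/p) * Mp') := Real.log_le_log hMq'pos h1
      _ = (1/q-1/p) * w + u := by
          rw [Real.log_mul (by positivity) (ne_of_gt hMp'pos), Real.log_rpow hApos]
  set a := Real.exp (v - w/q) with hadef
  set b := Real.exp ((p*u - q*v)/(p-q)) with hbdef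
  have ha0 : 0 < a := Real.exp_pos _
  have hb0 : 0 < b := Real.exp_pos _
  have hexp : v - w/q ≤ (p*u - q*v)/(p-q) := by
    rw [le_div_iff₀ hpq]
    have e1 : q * (w/q) = w := by field_simp
    have e2 : p * ((1/q - 1/p) * w) = (p/q) * w - w := by field_simp
    have e3 : q * ((p/q) * w) = p * w := by field_simp
    nlinarith [mul_le_mul_of_nonneg_left hvle hq0.le, mul_le_mul_of_nonneg_left hvle hp0.le]
  have hab : a ≤ b := Real.exp_le_exp.2 hexp
  -- region 1
  have h1 : ∫⁻ l in Set.Ioc (0:ℝ) a,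
      ENNReal.ofReal (l ^ (r - 1)) * (μ {x | l < f x}) ^ (r / q)
      ≤ ENNReal.ofReal (Real.exp (v*r) / r) := by
    calc ∫⁻ l in Set.Ioc (0:ℝ) a, ENNReal.ofReal (l ^ (r - 1)) * (μ {x | l < f x}) ^ (r / q)
        ≤ ∫⁻ l in Set.Ioc (0:ℝ) a, ENNReal.ofReal (A^(r/q)) * ENNReal.ofReal (l^(r-1)) := by
          refine setLIntegral_mono' measurableSet_Ioc fun l hl => ?_
          rw [mul_comm (ENNReal.ofReal (A^(r/q)))]
          refine mul_le_mul' le_rfl ?_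
          have hle : μ {x | l < f x} ≤ ENNReal.ofReal A := by
            rw [hAdef, ENNReal.ofReal_toReal hμ]; exact hdle l
          calc (μ {x | l < f x}) ^ (r/q) ≤ (ENNReal.ofReal A) ^ (r/q) :=
                ENNReal.rpow_le_rpow hle (by positivity)
            _ = ENNReal.ofReal (A^(r/q)) :=
                ENNReal.ofReal_rpow_of_nonneg hApos.le (by positivity)
      _ = ENNReal.ofReal (A^(r/q)) * ∫⁻ l in Set.Ioc (0:ℝ) a, ENNReal.ofReal (l^(r-1)) :=
          lintegral_const_mul' _ _ ENNReal.ofReal_ne_top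
      _ = ENNReal.ofReal (A^(r/q)) * ENNReal.ofReal ((a^(r-1+1) - 0^(r-1+1))/(r-1+1)) := by
          rw [lint_Ioc_rpow 0 a (r-1) le_rfl ha0.le (by linarith)]
      _ = ENNReal.ofReal (Real.exp (v*r) / r) := by
          rw [← ENNReal.ofReal_mul (by positivity)]
          congr 1
          rw [show r-1+1 = r by ring, Real.zero_rpow hr0.ne', sub_zero, hAe, hadef,
            exp_rpow', exp_rpow', ← mul_div_assoc, ← Real.exp_add]
          congr 2
          field_simp
          ring
  -- region 2
  have h2 : ∫⁻ l in Set.Ioc a b,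
      ENNReal.ofReal (l ^ (r - 1)) * (μ {x | l < f x}) ^ (r / q)
      ≤ ENNReal.ofReal (Real.exp (v*r) * ((p*u - q*v)/(p-q) - (v - w/q))) := by
    have eq2 : ∀ l : ℝ, 0 < l → l^(r-1) * ((Mq'/l)^q)^(r/q) = Mq'^r * l⁻¹ := by
      intro l hl
      rw [← Real.rpow_mul (by positivity), show q * (r/q) = r from by field_simp,
        Real.div_rpow hMq'pos.le hl.le]
      have h5 : l ^ (r-1) / l ^ r = l⁻¹ := by
        rw [← Real.rpow_sub hl, show r-1-r = (-1:ℝ) by ring, Real.rpow_neg_one]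
      rw [← h5]; ring
    calc ∫⁻ l in Set.Ioc a b, ENNReal.ofReal (l ^ (r - 1)) * (μ {x | l < f x}) ^ (r / q)
        ≤ ∫⁻ l in Set.Ioc a b, ENNReal.ofReal (Mq'^r) * ENNReal.ofReal l⁻¹ := by
          refine setLIntegral_mono' measurableSet_Ioc fun l hl => ?_
          have hl0 : 0 < l := lt_trans ha0 hl.1
          calc ENNReal.ofReal (l ^ (r - 1)) * (μ {x | l < f x}) ^ (r / q)
              ≤ ENNReal.ofReal (l ^ (r - 1)) * ENNReal.ofReal (((Mq'/l)^q)^(r/q)) := by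
                refine mul_le_mul' le_rfl ?_
                calc (μ {x | l < f x}) ^ (r/q)
                    ≤ (ENNReal.ofReal ((Mq'/l)^q)) ^ (r/q) :=
                      ENNReal.rpow_le_rpow (hD q hq0 hqtop l hl0) (by positivity)
                  _ = ENNReal.ofReal (((Mq'/l)^q)^(r/q)) :=
                      ENNReal.ofReal_rpow_of_nonneg (by positivity) (by positivity)
            _ = ENNReal.ofReal (Mq'^r) * ENNReal.ofReal l⁻¹ := by
                rw [← ENNReal.ofReal_mul (by positivity), eq2 l hl0,
                  ENNReal.ofReal_mul (by positivity)]
      _ = ENNReal.ofReal (Mq'^r) * ENNReal.ofReal (Real.log (b/a)) := by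
          rw [lintegral_const_mul' _ _ ENNReal.ofReal_ne_top, lint_Ioc_inv a b ha0 hab]
      _ = ENNReal.ofReal (Real.exp (v*r) * ((p*u - q*v)/(p-q) - (v - w/q))) := by
          rw [← ENNReal.ofReal_mul (by positivity)]
          congr 1
          rw [hMq'e, exp_rpow', Real.log_div hb0.ne' ha0.ne', hadef, hbdef,
            Real.log_exp, Real.log_exp]
  -- region 3
  have he3 : r - 1 - p*(r/q) < -1 := by
    have e1 : q * (p*(r/q)) = p*r := by field_simp
    nlinarith [mul_pos hr0 hpq]
  have h3 : ∫⁻ l in Set.Ioi b,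
      ENNReal.ofReal (l ^ (r - 1)) * (μ {x | l < f x}) ^ (r / q)
      ≤ ENNReal.ofReal (Real.exp (v*r) * (q / (r*(p-q)))) := by
    have eq3 : ∀ l : ℝ, 0 < l →
        l^(r-1) * ((Mp'/l)^p)^(r/q) = Mp'^(p*(r/q)) * l^(r-1-p*(r/q)) := by
      intro l hl
      rw [← Real.rpow_mul (by positivity), Real.div_rpow hMp'pos.le hl.le]
      have h5 : l ^ (r-1) / l ^ (p*(r/q)) = l^(r-1-p*(r/q)) := by
        rw [← Real.rpow_sub hl]
      rw [← h5]; ring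
    calc ∫⁻ l in Set.Ioi b, ENNReal.ofReal (l ^ (r - 1)) * (μ {x | l < f x}) ^ (r / q)
        ≤ ∫⁻ l in Set.Ioi b, ENNReal.ofReal (Mp'^(p*(r/q))) * ENNReal.ofReal (l^(r-1-p*(r/q))) := by
          refine setLIntegral_mono' measurableSet_Ioi fun l hl => ?_
          have hl0 : 0 < l := lt_trans hb0 hl
          calc ENNReal.ofReal (l ^ (r - 1)) * (μ {x | l < f x}) ^ (r / q)
              ≤ ENNReal.ofReal (l ^ (r - 1)) * ENNReal.ofReal (((Mp'/l)^p)^(r/q)) := by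
                refine mul_le_mul' le_rfl ?_
                calc (μ {x | l < f x}) ^ (r/q)
                    ≤ (ENNReal.ofReal ((Mp'/l)^p)) ^ (r/q) :=
                      ENNReal.rpow_le_rpow (hD p hp0 hMp l hl0) (by positivity)
                  _ = ENNReal.ofReal (((Mp'/l)^p)^(r/q)) :=
                      ENNReal.ofReal_rpow_of_nonneg (by positivity) (by positivity)
            _ = ENNReal.ofReal (Mp'^(p*(r/q))) * ENNReal.ofReal (l^(r-1-p*(r/q))) := by
                rw [← ENNReal.ofReal_mul (by positivity), eq3 l hl0,
                  ENNReal.ofReal_mul (by positivity)]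
      _ = ENNReal.ofReal (Mp'^(p*(r/q)))
            * ENNReal.ofReal (-b^(r-1-p*(r/q)+1)/(r-1-p*(r/q)+1)) := by
          rw [lintegral_const_mul' _ _ ENNReal.ofReal_ne_top, lint_Ioi_rpow b _ hb0 he3]
      _ = ENNReal.ofReal (Real.exp (v*r) * (q / (r*(p-q)))) := by
          rw [← ENNReal.ofReal_mul (by positivity)]
          congr 1
          have hne : r-1-p*(r/q)+1 ≠ 0 := by linarith
          rw [hMp'e, hbdef, exp_rpow', exp_rpow',
            show Real.exp (u*(p*(r/q))) * (-Real.exp ((p*u-q*v)/(p-q)*(r-1-p*(r/q)+1))/(r-1-p*(r/q)+1))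
              = Real.exp (u*(p*(r/q)) + (p*u-q*v)/(p-q)*(r-1-p*(r/q)+1)) * (-1/(r-1-p*(r/q)+1)) from by
              rw [Real.exp_add]; ring]
          have hXY : u*(p*(r/q)) + (p*u-q*v)/(p-q)*(r-1-p*(r/q)+1) = v*r := by
            field_simp
            ring
          have hc : -1/(r-1-p*(r/q)+1) = q/(r*(p-q)) := by
            rw [div_eq_div_iff hne (by positivity)]
            field_simp
            ring
          rw [hXY, hc]
  -- assemble
  have hsplit : Set.Ioi (0:ℝ) = (Set.Ioc 0 a ∪ Set.Ioc a b) ∪ Set.Ioi b := by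
    rw [Set.Ioc_union_Ioc_eq_Ioc ha0.le hab, Set.Ioc_union_Ioi_eq_Ioi (le_trans ha0.le hab)]
  have hT2 : 0 ≤ Real.exp (v*r) * ((p*u - q*v)/(p-q) - (v - w/q)) :=
    mul_nonneg (Real.exp_pos _).le (by linarith [hexp])
  calc ∫⁻ l in Set.Ioi (0:ℝ), ENNReal.ofReal (l ^ (r - 1)) * (μ {x | l < f x}) ^ (r / q)
      = (∫⁻ l in Set.Ioc (0:ℝ) a, ENNReal.ofReal (l ^ (r - 1)) * (μ {x | l < f x}) ^ (r / q))
        + (∫⁻ l in Set.Ioc a b, ENNReal.ofReal (l ^ (r - 1)) * (μ {x | l < f x}) ^ (r / q))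
        + (∫⁻ l in Set.Ioi b, ENNReal.ofReal (l ^ (r - 1)) * (μ {x | l < f x}) ^ (r / q)) := by
        rw [show Set.Ioi (0:ℝ) = Set.Ioc 0 b ∪ Set.Ioi b from
            (Set.Ioc_union_Ioi_eq_Ioi (le_trans ha0.le hab)).symm,
          lintegral_union measurableSet_Ioi (Set.Ioc_disjoint_Ioi le_rfl),
          show Set.Ioc (0:ℝ) b = Set.Ioc 0 a ∪ Set.Ioc a b from
            (Set.Ioc_union_Ioc_eq_Ioc ha0.le hab).symm,
          lintegral_union measurableSet_Ioc (Set.Ioc_disjoint_Ioc_of_le le_rfl)]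
    _ ≤ ENNReal.ofReal (Real.exp (v*r) / r)
        + ENNReal.ofReal (Real.exp (v*r) * ((p*u - q*v)/(p-q) - (v - w/q)))
        + ENNReal.ofReal (Real.exp (v*r) * (q / (r*(p-q)))) :=
        add_le_add (add_le_add h1 h2) h3
    _ = ENNReal.ofReal (Real.exp (v*r) / r
        + Real.exp (v*r) * ((p*u - q*v)/(p-q) - (v - w/q))
        + Real.exp (v*r) * (q / (r*(p-q)))) := by
        rw [← ENNReal.ofReal_add (by positivity) hT2,
          ← ENNReal.ofReal_add (add_nonneg (by positivity) hT2) (by positivity)]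
    _ = ENNReal.ofReal (p / (p - q) * Mq' ^ r *
        (1 / r + Real.log (A ^ (1 / q - 1 / p) * Mp' / Mq'))) := by
        congr 1
        rw [hMq'e, hMp'e, hAe, exp_rpow', exp_rpow',
          Real.log_div (by positivity) (Real.exp_pos v).ne',
          Real.log_mul (by positivity) (Real.exp_pos u).ne',
          Real.log_exp, Real.log_exp, Real.log_exp]
        exact final_identity p q r u v w _ hp0 hq0 hr0 hpq
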